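/- Let K be a field of characteristic zero, m ≥ 0, and R = K[t_1,…,t_m]. Let C_* be the chain complex with C_k = R ⊗_K Λ^k(K^m) for 0 ≤ k ≤ m (where K^m has basis w_1,…,w_m) and C_k = 0 otherwise, with differential d : C_k → C_{k−1} given on basis elements by d(f ⊗ w_{i_1}∧⋯∧w_{i_k}) = ∑_{r=1}^k (−1)^{r−1} (∂f/∂t_{i_r}) ⊗ w_{i_1}∧⋯∧ŵ_{i_r}∧⋯∧w_{i_k} for i_1 < ⋯ < i_k (ŵ meaning that factor is omitted). Then H_k(C_*) = 0 for all k ≠ m, and H_m(C_*) is a one-dimensional K-vector space spanned by the class of 1 ⊗ w_1∧⋯∧w_m. -/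

import Mathlib

set_option linter.unusedSectionVars false
set_option maxHeartbeats 1000000



/-- The degree-`k` part of the Koszul-type complex `C_* = K[t_1,…,t_m] ⊗ Λ^*(K^m)`,
encoded as functions from the canonical basis of `Λ^k(K^m)` (the `k`-element subsets of the
`m` generators `w_1, …, w_m`, in increasing order) to `R = K[t_1,…,t_m]`. -/
abbrev KoszulC (K : Type*) [Field K] (m k : ℕ) : Type _ :=
  {s : Finset (Fin m) // s.card = k} → MvPolynomial (Fin m) K

/-- The differential `d : C_{k+1} → C_k`, given on basis elements by
`d(f ⊗ w_{i_1}∧⋯∧w_{i_{k+1}}) = ∑_r (−1)^{r−1} (∂f/∂t_{i_r}) ⊗ w_{i_1}∧⋯∧ŵ_{i_r}∧⋯`. -/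
noncomputable def koszulDiff (K : Type*) [Field K] [CharZero K] (m k : ℕ) :
    KoszulC K m (k + 1) →ₗ[K] KoszulC K m k :=
  LinearMap.pi fun t =>
    ∑ r ∈ (Finset.univ \ t.val).attach,
      ((-1 : K) ^ (t.val.filter fun x => x < r.val).card) •
        ((MvPolynomial.pderiv r.val).toLinearMap.comp
          (LinearMap.proj (⟨insert r.val t.val, by
            have hr : r.val ∉ t.val := (Finset.mem_sdiff.mp r.property).2
            rw [Finset.card_insert_of_notMem hr, t.property]⟩ :
            {s : Finset (Fin m) // s.card = k + 1})))



open MvPolynomial Finset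

section KoszulAux

variable {K : Type*} [Field K] [CharZero K] {m : ℕ}

lemma pderiv_comm' (i j : Fin m) (p : MvPolynomial (Fin m) K) :
    pderiv i (pderiv j p) = pderiv j (pderiv i p) := by
  by_cases hij : i = j
  · subst hij; rfl
  induction p using MvPolynomial.induction_on' with
  | monomial α a =>
      rw [pderiv_monomial, pderiv_monomial, pderiv_monomial, pderiv_monomial]
      have h1 : (α - Finsupp.single j 1 : Fin m →₀ ℕ) i = α i := by
        simp [Finsupp.sub_apply, Finsupp.single_apply, Ne.symm hij]
      have h2 : (α - Finsupp.single i 1 : Fin m →₀ ℕ) j = α j := by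
        simp [Finsupp.sub_apply, Finsupp.single_apply, hij]
      rw [h1, h2]
      have h3 : α - Finsupp.single j 1 - Finsupp.single i 1
          = α - Finsupp.single i 1 - Finsupp.single j 1 := by
        rw [tsub_tsub, tsub_tsub, add_comm]
      rw [h3]; ring_nf
  | add p q hp hq => simp [map_add, hp, hq]


noncomputable def dTot (f : Finset (Fin m) → MvPolynomial (Fin m) K) :
    Finset (Fin m) → MvPolynomial (Fin m) K := fun T =>
  ∑ r ∈ univ \ T, ((-1 : K) ^ (T.filter fun x => x < r).card) • pderiv r (f (insert r T))

lemma filter_insert_card (T : Finset (Fin m)) {r : Fin m} (s : Fin m) (hr : r ∉ T) :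
    ((insert r T).filter fun x => x < s).card
      = (T.filter fun x => x < s).card + if r < s then 1 else 0 := by
  rw [Finset.filter_insert]
  split_ifs with h
  · rw [Finset.card_insert_of_notMem (by simp [hr])]
  · simp

lemma sdiff_insert_eq (T : Finset (Fin m)) (r : Fin m) :
    (univ : Finset (Fin m)) \ insert r T = (univ \ T).erase r := by
  ext x; simp [mem_sdiff, mem_erase, and_comm, not_or]


lemma sign_dd {T : Finset (Fin m)} {r s : Fin m} (hr : r ∉ T) (hs : s ∉ T) (hrs : r ≠ s) :
    ((-1:K) ^ (T.filter fun x => x < r).card) * (-1:K) ^ ((insert r T).filter fun x => x < s).card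
    = -(((-1:K) ^ (T.filter fun x => x < s).card) *
        (-1:K) ^ ((insert s T).filter fun x => x < r).card) := by
  rw [filter_insert_card T s hr, filter_insert_card T r hs, pow_add, pow_add]
  rcases hrs.lt_or_gt with h | h
  · rw [if_pos h, if_neg (asymm h)]; ring
  · rw [if_neg (asymm h), if_pos h]; ring

lemma dTot_dTot (f : Finset (Fin m) → MvPolynomial (Fin m) K) (T : Finset (Fin m)) :
    dTot (dTot f) T = 0 := by
  rw [dTot]
  have expand : ∀ r ∈ univ \ T,
      ((-1:K) ^ (T.filter fun x => x < r).card) • pderiv r (dTot f (insert r T))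
        = ∑ s ∈ (univ \ T).erase r,
            (((-1:K) ^ (T.filter fun x => x < r).card) *
              (-1:K) ^ ((insert r T).filter fun x => x < s).card) •
              pderiv r (pderiv s (f (insert s (insert r T)))) := by
    intro r hr
    rw [dTot, ← sdiff_insert_eq, ← Derivation.coeFn_coe (pderiv r), map_sum, Finset.smul_sum]
    refine Finset.sum_congr rfl fun s hs => ?_
    rw [map_smul, smul_smul]
  rw [Finset.sum_congr rfl expand, Finset.sum_sigma']
  refine Finset.sum_involution (fun p _ => ⟨p.2, p.1⟩) ?_ ?_ ?_ ?_
  · rintro ⟨r, s⟩ hp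
    simp only [Finset.mem_sigma, Finset.mem_erase, Finset.mem_sdiff] at hp
    obtain ⟨⟨-, hrT⟩, hsr, -, hsT⟩ := hp
    have hrs : r ≠ s := Ne.symm hsr
    dsimp only
    rw [Finset.insert_comm s r, pderiv_comm' s r, sign_dd hsT hrT (Ne.symm hrs)]
    rw [neg_smul, add_neg_cancel]
  · rintro ⟨r, s⟩ hp -
    simp only [Finset.mem_sigma, Finset.mem_erase] at hp
    intro h
    have : s = r := congrArg Sigma.fst h
    exact hp.2.1 this
  · rintro ⟨r, s⟩ hp
    simp only [Finset.mem_sigma, Finset.mem_erase, Finset.mem_sdiff] at hp ⊢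
    obtain ⟨⟨-, hrT⟩, hsr, -, hsT⟩ := hp
    exact ⟨⟨Finset.mem_univ s, hsT⟩, Ne.symm hsr, Finset.mem_univ r, hrT⟩
  · rintro ⟨r, s⟩ hp; rfl


noncomputable def hTot (f : Finset (Fin m) → MvPolynomial (Fin m) K) :
    Finset (Fin m) → MvPolynomial (Fin m) K := fun S =>
  ∑ s ∈ S, ((-1 : K) ^ ((S.erase s).filter fun x => x < s).card) • (X s * f (S.erase s))

lemma neg_one_sq_smul {M : Type*} [AddCommMonoid M] [Module K M] (n : ℕ) (x : M) :
    ((-1 : K) ^ n) • ((-1 : K) ^ n • x) = x := by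
  rw [smul_smul, ← pow_add, Even.neg_one_pow ⟨n, (two_mul n).symm ▸ (two_mul n)⟩, one_smul]

lemma sdiff_erase_eq (S : Finset (Fin m)) (s : Fin m) :
    (univ : Finset (Fin m)) \ S.erase s = insert s (univ \ S) := by
  ext x
  by_cases h : x = s <;> simp [mem_sdiff, mem_erase, mem_insert, h]

lemma pderiv_sum {ι : Type*} (r : Fin m) (t : Finset ι) (g : ι → MvPolynomial (Fin m) K) :
    pderiv r (∑ i ∈ t, g i) = ∑ i ∈ t, pderiv r (g i) := by
  rw [← Derivation.coeFn_coe (pderiv r)]; exact map_sum _ _ _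

lemma pderiv_smul' (r : Fin m) (c : K) (p : MvPolynomial (Fin m) K) :
    pderiv r (c • p) = c • pderiv r p := Derivation.map_smul _ _ _

lemma sign_hd {S : Finset (Fin m)} {r s : Fin m} (hr : r ∉ S) (hs : s ∈ S) :
    ((-1:K) ^ (S.filter fun x => x < r).card) *
        (-1:K) ^ ((insert r (S.erase s)).filter fun x => x < s).card
    = -(((-1:K) ^ ((S.erase s).filter fun x => x < s).card) *
        (-1:K) ^ ((S.erase s).filter fun x => x < r).card) := by
  have hrs : r ≠ s := fun h => hr (h ▸ hs)
  have h1 : (S.filter fun x => x < r).card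
      = ((S.erase s).filter fun x => x < r).card + if s < r then 1 else 0 := by
    conv_lhs => rw [← Finset.insert_erase hs]
    exact filter_insert_card _ r (Finset.notMem_erase s S)
  have hrS : r ∉ S.erase s := fun h => hr (Finset.mem_of_mem_erase h)
  rw [h1, filter_insert_card _ s hrS, pow_add, pow_add]
  rcases hrs.lt_or_gt with h | h
  · rw [if_neg (asymm h), if_pos h]; ring
  · rw [if_pos h, if_neg (asymm h)]; ring

/-- The master homotopy identity, at the level of total functions. -/
lemma master (f : Finset (Fin m) → MvPolynomial (Fin m) K) (S : Finset (Fin m)) :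
    dTot (hTot f) S + hTot (dTot f) S
      = ((univ \ S).card) • f S + ∑ i : Fin m, X i * pderiv i (f S) := by
  classical
  -- expand the first term
  have step1 : dTot (hTot f) S
      = (∑ r ∈ univ \ S, (f S + X r * pderiv r (f S)))
        + ∑ r ∈ univ \ S, ∑ s ∈ S,
            (((-1:K) ^ (S.filter fun x => x < r).card) *
              (-1:K) ^ ((insert r (S.erase s)).filter fun x => x < s).card) •
              (X s * pderiv r (f (insert r (S.erase s)))) := by
    rw [dTot, ← Finset.sum_add_distrib]
    refine Finset.sum_congr rfl fun r hr => ?_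
    have hr' : r ∉ S := (Finset.mem_sdiff.mp hr).2
    rw [hTot, Finset.sum_insert hr', Finset.erase_insert hr']
    rw [Derivation.map_add, pderiv_sum, smul_add]
    congr 1
    · rw [pderiv_smul', Derivation.leibniz, pderiv_X_self, neg_one_sq_smul, smul_eq_mul,
        smul_eq_mul, mul_one, add_comm]
    · rw [Finset.smul_sum]
      refine Finset.sum_congr rfl fun s hs => ?_
      have hrs : r ≠ s := fun h => hr' (h ▸ hs)
      have herase : (insert r S).erase s = insert r (S.erase s) :=
        Finset.erase_insert_of_ne hrs
      rw [herase, pderiv_smul', smul_smul]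
      congr 1
      rw [Derivation.leibniz, pderiv_X_of_ne (Ne.symm hrs), smul_eq_mul, smul_eq_mul,
        mul_zero, add_zero]
  -- expand the second term
  have step2 : hTot (dTot f) S
      = (∑ s ∈ S, X s * pderiv s (f S))
        + ∑ s ∈ S, ∑ r ∈ univ \ S,
            (((-1:K) ^ ((S.erase s).filter fun x => x < s).card) *
              (-1:K) ^ ((S.erase s).filter fun x => x < r).card) •
              (X s * pderiv r (f (insert r (S.erase s)))) := by
    rw [hTot, ← Finset.sum_add_distrib]
    refine Finset.sum_congr rfl fun s hs => ?_
    have hs' : s ∉ univ \ S := by simp [Finset.mem_sdiff, hs]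
    rw [dTot, sdiff_erase_eq, Finset.sum_insert hs', Finset.insert_erase hs, mul_add,
      smul_add]
    congr 1
    · rw [mul_smul_comm, neg_one_sq_smul]
    · rw [Finset.mul_sum, Finset.smul_sum]
      refine Finset.sum_congr rfl fun r hr => ?_
      rw [mul_smul_comm, smul_smul]
  have cancel : (∑ r ∈ univ \ S, ∑ s ∈ S,
        (((-1:K) ^ (S.filter fun x => x < r).card) *
          (-1:K) ^ ((insert r (S.erase s)).filter fun x => x < s).card) •
          (X s * pderiv r (f (insert r (S.erase s)))))
      + ∑ s ∈ S, ∑ r ∈ univ \ S,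
          (((-1:K) ^ ((S.erase s).filter fun x => x < s).card) *
            (-1:K) ^ ((S.erase s).filter fun x => x < r).card) •
            (X s * pderiv r (f (insert r (S.erase s)))) = 0 := by
    rw [Finset.sum_comm (s := S) (t := univ \ S), ← Finset.sum_add_distrib]
    refine Finset.sum_eq_zero fun r hr => ?_
    rw [← Finset.sum_add_distrib]
    refine Finset.sum_eq_zero fun s hs => ?_
    have hr' : r ∉ S := (Finset.mem_sdiff.mp hr).2
    rw [sign_hd hr' hs, neg_smul, neg_add_cancel]
  have assemble : dTot (hTot f) S + hTot (dTot f) S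
      = ((∑ r ∈ univ \ S, (f S + X r * pderiv r (f S)))
          + (∑ s ∈ S, X s * pderiv s (f S)))
        + ((∑ r ∈ univ \ S, ∑ s ∈ S,
            (((-1:K) ^ (S.filter fun x => x < r).card) *
              (-1:K) ^ ((insert r (S.erase s)).filter fun x => x < s).card) •
              (X s * pderiv r (f (insert r (S.erase s)))))
          + ∑ s ∈ S, ∑ r ∈ univ \ S,
              (((-1:K) ^ ((S.erase s).filter fun x => x < s).card) *
                (-1:K) ^ ((S.erase s).filter fun x => x < r).card) •
                (X s * pderiv r (f (insert r (S.erase s))))) := by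
    rw [step1, step2, add_add_add_comm]
  rw [assemble, cancel, add_zero, Finset.sum_add_distrib, Finset.sum_const, add_assoc,
    Finset.sum_sdiff (Finset.subset_univ S)]


noncomputable def psi (m : ℕ) (c : ℕ) : MvPolynomial (Fin m) K →ₗ[K] MvPolynomial (Fin m) K :=
  (Finsupp.lsum K fun α => ((((α.sum fun _ n => n) + c : ℕ) : K))⁻¹ •
    (monomial α : K →ₗ[K] MvPolynomial (Fin m) K)) ∘ₗ
    (AddMonoidAlgebra.coeffLinearEquiv K).toLinearMap

lemma psi_monomial (c : ℕ) (α : (Fin m) →₀ ℕ) (a : K) :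
    psi m c (monomial α a) = ((((α.sum fun _ n => n) + c : ℕ) : K))⁻¹ • monomial α a := by
  rw [psi, ← single_eq_monomial]
  rw [LinearMap.comp_apply, LinearEquiv.coe_coe]
  change Finsupp.lsum K _ (Finsupp.single α a) = _
  rw [Finsupp.lsum_single]
  simp [single_eq_monomial]

lemma single_add_sub {α : Fin m →₀ ℕ} {i : Fin m} (h : α i ≠ 0) :
    Finsupp.single i 1 + (α - Finsupp.single i 1) = α := by
  ext j
  by_cases hj : j = i
  · subst hj
    simp only [Finsupp.add_apply, Finsupp.single_apply, if_pos rfl, if_true,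
      Finsupp.tsub_apply]
    omega
  · simp [Finsupp.add_apply, Finsupp.single_apply, Ne.symm hj, Finsupp.tsub_apply]

lemma sub_single_sum {α : Fin m →₀ ℕ} {i : Fin m} (h : α i ≠ 0) :
    ((α - Finsupp.single i 1).sum fun _ n => n) + 1 = α.sum fun _ n => n := by
  conv_rhs => rw [← single_add_sub h]
  rw [Finsupp.sum_add_index' (fun _ => rfl) (fun _ _ _ => rfl), Finsupp.sum_single_index rfl]
  omega

lemma euler_monomial (α : Fin m →₀ ℕ) (a : K) :
    ∑ i : Fin m, X i * pderiv i (monomial α a)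
      = (((α.sum fun _ n => n : ℕ)) : K) • monomial α a := by
  have key : ∀ i : Fin m, X i * pderiv i (monomial α a) = ((α i : K)) • monomial α a := by
    intro i
    rw [pderiv_monomial]
    by_cases h : α i = 0
    · simp [h]
    · rw [X, monomial_mul, single_add_sub h, smul_monomial]
      rw [smul_eq_mul]
      congr 1
      ring
  rw [Finset.sum_congr rfl fun i _ => key i, ← Finset.sum_smul]
  have hs : (α.sum fun _ n => n) = ∑ i : Fin m, α i :=
    Finsupp.sum_fintype _ _ fun _ => rfl
  rw [hs]
  push_cast
  rfl

lemma euler_psi {c : ℕ} (hc : c ≠ 0) (p : MvPolynomial (Fin m) K) :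
    (∑ i : Fin m, X i * pderiv i (psi m c p)) + c • psi m c p = p := by
  induction p using MvPolynomial.induction_on' with
  | monomial α a =>
      rw [psi_monomial]
      have hne : (((α.sum fun _ n => n) + c : ℕ) : K) ≠ 0 :=
        Nat.cast_ne_zero.mpr (by omega)
      have h1 : ∀ i : Fin m, X i * pderiv i
          ((((( α.sum fun _ n => n) + c : ℕ) : K))⁻¹ • monomial α a)
          = (((((α.sum fun _ n => n) + c : ℕ) : K))⁻¹) • (X i * pderiv i (monomial α a)) := by
        intro i
        rw [pderiv_smul', mul_smul_comm]
      rw [Finset.sum_congr rfl fun i _ => h1 i, ← Finset.smul_sum, euler_monomial,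
        smul_smul, ← Nat.cast_smul_eq_nsmul K c, smul_smul, ← add_smul]
      have hone : ((((α.sum fun _ n => n) + c : ℕ) : K))⁻¹ * ((α.sum fun _ n => n : ℕ) : K)
          + (c : K) * ((((α.sum fun _ n => n) + c : ℕ) : K))⁻¹ = 1 := by
        rw [mul_comm (c : K) _, ← mul_add]
        have hcast : ((α.sum fun _ n => n : ℕ) : K) + (c : K)
            = (((α.sum fun _ n => n) + c : ℕ) : K) := by push_cast; ring
        rw [hcast, inv_mul_cancel₀ hne]
      rw [hone, one_smul]
  | add p q hp hq =>
      rw [map_add, smul_add]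
      have : ∀ i : Fin m, X i * pderiv i (psi m c p + psi m c q)
          = X i * pderiv i (psi m c p) + X i * pderiv i (psi m c q) := by
        intro i; rw [Derivation.map_add, mul_add]
      rw [Finset.sum_congr rfl fun i _ => this i, Finset.sum_add_distrib]
      calc _ = ((∑ i : Fin m, X i * pderiv i (psi m c p)) + c • psi m c p)
          + ((∑ i : Fin m, X i * pderiv i (psi m c q)) + c • psi m c q) := by abel
        _ = p + q := by rw [hp, hq]

lemma psi_pderiv (c : ℕ) (i : Fin m) (p : MvPolynomial (Fin m) K) :
    pderiv i (psi m c p) = psi m (c + 1) (pderiv i p) := by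
  induction p using MvPolynomial.induction_on' with
  | monomial α a =>
      rw [psi_monomial, pderiv_smul', pderiv_monomial, psi_monomial]
      by_cases h : α i = 0
      · simp [h]
      · have : ((α - Finsupp.single i 1).sum fun _ n => n) + (c + 1)
            = (α.sum fun _ n => n) + c := by
          have := sub_single_sum (α := α) (i := i) h
          omega
        rw [this]
  | add p q hp hq =>
      simp only [map_add, Derivation.map_add, hp, hq]

lemma euler_coeff (α : Fin m →₀ ℕ) (p : MvPolynomial (Fin m) K) :
    coeff α (∑ i : Fin m, X i * pderiv i p)
      = ((α.sum fun _ n => n : ℕ) : K) * coeff α p := by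
  induction p using MvPolynomial.induction_on' with
  | monomial β a =>
      rw [euler_monomial, coeff_smul, coeff_monomial]
      by_cases h : β = α
      · subst h; rw [smul_eq_mul]
      · rw [if_neg h, smul_zero, mul_zero]
  | add p q hp hq =>
      have : ∀ i : Fin m, X i * pderiv i (p + q)
          = X i * pderiv i p + X i * pderiv i q := by
        intro i; rw [Derivation.map_add, mul_add]
      rw [Finset.sum_congr rfl fun i _ => this i, Finset.sum_add_distrib, coeff_add, hp, hq,
        coeff_add, mul_add]

lemma sum_ne_zero_of_ne_zero {α : Fin m →₀ ℕ} (h : α ≠ 0) :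
    (α.sum fun _ n => n) ≠ 0 := by
  obtain ⟨i, hi⟩ : ∃ i, α i ≠ 0 := by
    by_contra hcon
    push_neg at hcon
    exact h (Finsupp.ext fun i => hcon i)
  have hmem : i ∈ α.support := Finsupp.mem_support_iff.mpr hi
  have : α i ≤ α.sum fun _ n => n :=
    Finset.single_le_sum (f := fun j => α j) (fun _ _ => Nat.zero_le _) hmem
  omega

lemma eq_C_of_euler_eq_zero {p : MvPolynomial (Fin m) K}
    (h : ∑ i : Fin m, X i * pderiv i p = 0) : p = C (coeff 0 p) := by
  apply MvPolynomial.ext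
  intro α
  rw [coeff_C]
  by_cases hα : α = 0
  · subst hα; rw [if_pos rfl]
  · rw [if_neg (fun hh => hα hh.symm)]
    have h2 := euler_coeff α p
    rw [h, coeff_zero] at h2
    have h3 : ((α.sum fun _ n => n : ℕ) : K) ≠ 0 :=
      Nat.cast_ne_zero.mpr (sum_ne_zero_of_ne_zero hα)
    exact (mul_eq_zero.mp h2.symm).resolve_left h3

end KoszulAux

section KoszulMain

variable {K : Type*} [Field K] [CharZero K] {m : ℕ}

/-- Homotopy operator `h : C_k → C_{k+1}`. -/
noncomputable def koszulH (K : Type*) [Field K] [CharZero K] (m k : ℕ) :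
    KoszulC K m k →ₗ[K] KoszulC K m (k + 1) :=
  LinearMap.pi fun t =>
    ∑ s ∈ t.val.attach,
      ((-1 : K) ^ ((t.val.erase s.val).filter fun x => x < s.val).card) •
        ((LinearMap.mulLeft K (X s.val : MvPolynomial (Fin m) K)).comp
          (LinearMap.proj (⟨t.val.erase s.val, by
            simp [Finset.card_erase_of_mem s.property, t.property]⟩ :
            {S : Finset (Fin m) // S.card = k})))

/-- Extension of a chain to a total function on all finsets. -/
noncomputable def extC {k : ℕ} (c : KoszulC K m k) : Finset (Fin m) → MvPolynomial (Fin m) K :=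
  fun s => if h : s.card = k then c ⟨s, h⟩ else 0

lemma extC_spec {k : ℕ} (c : KoszulC K m k) (S : Finset (Fin m)) (h : S.card = k) :
    extC c S = c ⟨S, h⟩ := dif_pos h

lemma extC_ne {k : ℕ} (c : KoszulC K m k) (S : Finset (Fin m)) (h : ¬ S.card = k) :
    extC c S = 0 := dif_neg h

lemma extC_inj {k : ℕ} {c c' : KoszulC K m k} (h : extC c = extC c') : c = c' := by
  funext S
  have h2 := congrFun h S.val
  rw [extC_spec c S.val S.prop, extC_spec c' S.val S.prop] at h2
  exact h2

lemma extC_zero {k : ℕ} : extC (0 : KoszulC K m k) = 0 := by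
  funext S
  unfold extC
  split <;> rfl

lemma koszulDiff_apply {k : ℕ} (c : KoszulC K m (k + 1)) (T : {s : Finset (Fin m) // s.card = k}) :
    koszulDiff K m k c T = ∑ r ∈ (Finset.univ \ T.val).attach,
      ((-1 : K) ^ (T.val.filter fun x => x < r.val).card) •
        pderiv r.val (c ⟨insert r.val T.val, by
          rw [Finset.card_insert_of_notMem (Finset.mem_sdiff.mp r.property).2, T.property]⟩) := by
  simp [koszulDiff, LinearMap.pi_apply, LinearMap.sum_apply, LinearMap.smul_apply,
    LinearMap.comp_apply, LinearMap.proj_apply]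

lemma koszulH_apply {k : ℕ} (c : KoszulC K m k) (S : {s : Finset (Fin m) // s.card = k + 1}) :
    koszulH K m k c S = ∑ s ∈ S.val.attach,
      ((-1 : K) ^ ((S.val.erase s.val).filter fun x => x < s.val).card) •
        (X s.val * c ⟨S.val.erase s.val, by
          simp [Finset.card_erase_of_mem s.property, S.property]⟩) := by
  simp [koszulH, LinearMap.pi_apply, LinearMap.sum_apply, LinearMap.smul_apply,
    LinearMap.comp_apply, LinearMap.proj_apply, LinearMap.mulLeft_apply]

lemma extC_koszulDiff {k : ℕ} (c : KoszulC K m (k + 1)) :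
    extC (koszulDiff K m k c) = dTot (extC c) := by
  funext T
  by_cases hT : T.card = k
  · rw [extC_spec _ T hT, koszulDiff_apply, dTot]
    rw [← Finset.sum_attach (Finset.univ \ T)
      (fun r => ((-1 : K) ^ (T.filter fun x => x < r).card) • pderiv r (extC c (insert r T)))]
    refine Finset.sum_congr rfl fun r _ => ?_
    congr 1
    rw [extC_spec c (insert r.val T)
      (by rw [Finset.card_insert_of_notMem (Finset.mem_sdiff.mp r.property).2, hT])]
  · rw [extC_ne _ T hT, dTot]
    symm
    apply Finset.sum_eq_zero
    intro r hr
    have hcard : ¬ (insert r T).card = k + 1 := by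
      rw [Finset.card_insert_of_notMem (Finset.mem_sdiff.mp hr).2]
      omega
    rw [extC_ne _ _ hcard]
    simp

lemma extC_koszulH {k : ℕ} (c : KoszulC K m k) :
    extC (koszulH K m k c) = hTot (extC c) := by
  funext S
  by_cases hS : S.card = k + 1
  · rw [extC_spec _ S hS, koszulH_apply, hTot]
    rw [← Finset.sum_attach S
      (fun s => ((-1 : K) ^ ((S.erase s).filter fun x => x < s).card) • (X s * extC c (S.erase s)))]
    refine Finset.sum_congr rfl fun s _ => ?_
    congr 1
    rw [extC_spec c (S.erase s.val)
      (by simp [Finset.card_erase_of_mem s.property, hS])]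
  · rw [extC_ne _ S hS, hTot]
    symm
    apply Finset.sum_eq_zero
    intro s hs
    have hcard : ¬ (S.erase s).card = k := by
      rw [Finset.card_erase_of_mem hs]
      intro h
      apply hS
      have : 1 ≤ S.card := Finset.card_pos.mpr ⟨s, hs⟩
      omega
    rw [extC_ne _ _ hcard, mul_zero, smul_zero]

end KoszulMain

section KoszulGlue

variable {K : Type*} [Field K] [CharZero K] {m : ℕ}

noncomputable def psiC {k : ℕ} (c : KoszulC K m k) : KoszulC K m k :=
  fun S => psi m (m - k) (c S)

lemma extC_psiC_apply {k : ℕ} (c : KoszulC K m k) (S : Finset (Fin m)) :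
    extC (psiC c) S = psi m (m - k) (extC c S) := by
  by_cases h : S.card = k
  · rw [extC_spec _ _ h, extC_spec _ _ h]; rfl
  · rw [extC_ne _ _ h, extC_ne _ _ h, map_zero]

lemma psiC_zero {k : ℕ} : psiC (0 : KoszulC K m k) = 0 := by
  funext T; show psi m (m - k) 0 = 0; rw [map_zero]

lemma koszulDiff_psiC {k : ℕ} (hk : k + 1 ≤ m) (c : KoszulC K m (k + 1)) :
    koszulDiff K m k (psiC c) = psiC (koszulDiff K m k c) := by
  funext T
  show _ = psi m (m - k) (koszulDiff K m k c T)
  rw [koszulDiff_apply, koszulDiff_apply, map_sum]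
  refine Finset.sum_congr rfl fun r _ => ?_
  rw [map_smul]
  congr 1
  show pderiv r.val (psi m (m - (k + 1)) _) = _
  rw [psi_pderiv]
  have : m - (k + 1) + 1 = m - k := by omega
  rw [this]

lemma koszulDiff_koszulDiff {k : ℕ} (c : KoszulC K m (k + 2)) :
    koszulDiff K m k (koszulDiff K m (k + 1) c) = 0 := by
  apply extC_inj
  rw [extC_koszulDiff, extC_koszulDiff, extC_zero]
  funext T
  exact dTot_dTot _ T

lemma koszulDiff_one {k : ℕ} :
    koszulDiff K m k (fun _ => 1 : KoszulC K m (k + 1)) = 0 := by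
  apply extC_inj
  rw [extC_koszulDiff, extC_zero]
  funext T
  apply Finset.sum_eq_zero
  intro r hr
  have : extC (fun _ => 1 : KoszulC K m (k + 1)) (insert r T)
      = if (insert r T).card = k + 1 then 1 else 0 := by
    unfold extC; split_ifs with h <;> simp [h]
  rw [this]
  split_ifs <;> simp

/-- The key homotopy consequence: if the "one level down" differential of `extC (psiC c)`
vanishes, then `c` is in the image of the differential. -/
lemma homotopy_main {k : ℕ} (hk : k < m) (c : KoszulC K m k)
    (hdz : dTot (extC (psiC c)) = 0) :
    koszulDiff K m k (koszulH K m k (psiC c)) = c := by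
  apply extC_inj
  rw [extC_koszulDiff, extC_koszulH]
  funext S
  have hmaster := master (extC (psiC c)) S
  rw [hdz] at hmaster
  have h0 : hTot (0 : Finset (Fin m) → MvPolynomial (Fin m) K) S = 0 := by
    unfold hTot; apply Finset.sum_eq_zero; intro s hs; simp
  rw [h0, add_zero] at hmaster
  rw [hmaster, extC_psiC_apply]
  by_cases hS : S.card = k
  · have hcard : (Finset.univ \ S).card = m - k := by
      rw [Finset.card_sdiff_of_subset (Finset.subset_univ S), Finset.card_univ, Fintype.card_fin, hS]
    rw [hcard, add_comm]
    exact euler_psi (by omega) _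
  · rw [extC_ne _ _ hS, map_zero]
    simp

lemma ker_top {k : ℕ} (hm : m = k + 1) (c : KoszulC K m (k + 1))
    (hc : koszulDiff K m k c = 0) :
    ∃ a : K, c = a • (fun _ => 1 : KoszulC K m (k + 1)) := by
  have hcardu : (Finset.univ : Finset (Fin m)).card = k + 1 := by
    rw [Finset.card_univ, Fintype.card_fin, hm]
  have hmaster := master (extC c) Finset.univ
  have h1 : dTot (hTot (extC c)) Finset.univ = 0 := by
    unfold dTot; rw [Finset.sdiff_self (Finset.univ : Finset (Fin m))]; exact Finset.sum_empty
  have h2 : dTot (extC c) = 0 := by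
    rw [← extC_koszulDiff, hc, extC_zero]
  have h3 : hTot (0 : Finset (Fin m) → MvPolynomial (Fin m) K) Finset.univ = 0 := by
    unfold hTot; apply Finset.sum_eq_zero; intro s hs; simp
  rw [h1, h2, h3, Finset.sdiff_self (Finset.univ : Finset (Fin m)), Finset.card_empty, zero_smul, zero_add, zero_add] at hmaster
  have h4 : extC c Finset.univ = C (coeff 0 (extC c Finset.univ)) :=
    eq_C_of_euler_eq_zero hmaster.symm
  refine ⟨coeff 0 (extC c Finset.univ), ?_⟩
  funext S
  have hSu : S.val = Finset.univ :=
    S.val.eq_univ_of_card (by rw [S.prop, ← hm, Fintype.card_fin])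
  have hS : S = ⟨Finset.univ, hcardu⟩ := Subtype.ext hSu
  rw [hS, Pi.smul_apply, smul_eq_C_mul, mul_one, ← extC_spec c Finset.univ hcardu]
  exact h4

end KoszulGlue

/-- `H_k(C_*) = 0` for `k ≠ m`, and `H_m(C_*)` is one-dimensional, spanned by the class of
`1 ⊗ w_1∧⋯∧w_m`. -/
theorem koszul_homology (K : Type*) [Field K] [CharZero K] (m : ℕ) :
    (∀ k : ℕ, k + 1 ≠ m →
        LinearMap.ker (koszulDiff K m k) = LinearMap.range (koszulDiff K m (k + 1))) ∧
    (m ≠ 0 → LinearMap.range (koszulDiff K m 0) = ⊤) ∧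
    LinearMap.range (koszulDiff K m m) = ⊥ ∧
    (∀ k : ℕ, m = k + 1 →
        LinearMap.ker (koszulDiff K m k) =
          Submodule.span K {(fun _ => 1 : KoszulC K m (k + 1))}) ∧
    (m = 0 → (⊤ : Submodule K (KoszulC K m 0)) =
        Submodule.span K {(fun _ => 1 : KoszulC K m 0)}) ∧
    (fun _ => 1 : KoszulC K m m) ≠ 0 := by
  refine ⟨?_, ?_, ?_, ?_, ?_, ?_⟩
  · -- exactness away from the top degree
    intro k hk
    rcases Nat.lt_or_ge (k + 1) m with hlt | hge
    · apply le_antisymm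
      · intro c hc
        rw [LinearMap.mem_ker] at hc
        refine ⟨koszulH K m (k + 1) (psiC c), ?_⟩
        apply homotopy_main hlt c
        rw [← extC_koszulDiff, koszulDiff_psiC (by omega), hc, psiC_zero, extC_zero]
      · rintro x ⟨y, rfl⟩
        rw [LinearMap.mem_ker]
        exact koszulDiff_koszulDiff y
    · have hz : ∀ x : KoszulC K m (k + 1), x = 0 := by
        intro x; funext S
        exfalso
        have h1 : S.val.card ≤ m := by
          have h2 := Finset.card_le_univ S.val
          rwa [Fintype.card_fin] at h2
        have h3 := S.prop
        have h4 : m ≠ k + 1 := Ne.symm hk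
        omega
      apply le_antisymm
      · intro x hx
        rw [hz x]
        exact Submodule.zero_mem _
      · intro x hx
        rw [LinearMap.mem_ker, hz x, map_zero]
  · -- surjectivity at the bottom when m ≠ 0
    intro hm
    rw [eq_top_iff]
    intro c _
    refine ⟨koszulH K m 0 (psiC c), homotopy_main (Nat.pos_of_ne_zero hm) c ?_⟩
    funext T
    unfold dTot
    rw [Pi.zero_apply]
    apply Finset.sum_eq_zero
    intro r hr
    have hcard : ¬ (insert r T).card = 0 := by
      rw [Finset.card_insert_of_notMem (Finset.mem_sdiff.mp hr).2]; omega
    rw [extC_ne _ _ hcard]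
    simp
  · -- the range of the top differential is trivial
    rw [eq_bot_iff]
    rintro x ⟨c, rfl⟩
    have hc : c = 0 := by
      funext S
      exfalso
      have h1 : S.val.card ≤ m := by
        have h2 := Finset.card_le_univ S.val
        rwa [Fintype.card_fin] at h2
      have h3 := S.prop
      omega
    rw [hc, map_zero]
    exact Submodule.zero_mem _
  · -- the kernel at the top is spanned by 1 ⊗ w₁∧⋯∧wₘ
    intro k hm
    apply le_antisymm
    · intro c hc
      rw [LinearMap.mem_ker] at hc
      obtain ⟨a, ha⟩ := ker_top hm c hc
      rw [ha]
      exact Submodule.smul_mem _ a (Submodule.mem_span_singleton_self _)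
    · rw [Submodule.span_le]
      intro x hx
      rw [Set.mem_singleton_iff] at hx
      subst hx
      rw [SetLike.mem_coe, LinearMap.mem_ker]
      exact koszulDiff_one
  · -- the case m = 0
    intro hm
    subst hm
    refine le_antisymm ?_ le_top
    intro c _
    rw [Submodule.mem_span_singleton]
    obtain ⟨a, ha⟩ := MvPolynomial.C_surjective (Fin 0) (c ⟨∅, Finset.card_empty⟩)
    refine ⟨a, ?_⟩
    funext S
    have hS : S = ⟨∅, Finset.card_empty⟩ := Subtype.ext (Finset.card_eq_zero.mp S.prop)
    rw [hS, Pi.smul_apply, smul_eq_C_mul, mul_one, ha]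
  · -- the generator is nonzero
    intro h
    have h1 := congrFun h ⟨Finset.univ, by rw [Finset.card_univ, Fintype.card_fin]⟩
    exact one_ne_zero h1
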